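/- Let n be a positive integer and A an n×n complex matrix that is diagonalizable: A = T D T⁻¹ for some invertible matrix T and diagonal matrix D, and suppose every diagonal entry of D has real part strictly less than 0. For a multivariate polynomial p in the variables X₁,…,Xₙ over ℂ, define L(p) = Σᵢ (Σⱼ Aᵢⱼ Xⱼ) · (∂p/∂Xᵢ). Then L maps homogeneous polynomials of degree d to homogeneous polynomials of degree d, and for every integer d ≥ 1 and every homogeneous polynomial q of degree d there exists a unique homogeneous polynomial p of degree d with L(p) = q; i.e., L restricted to homogeneous polynomials of degree d is a linear bijection. -/

import Mathlib

open MvPolynomial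

/-- Lie derivative of a polynomial along the linear vector field `z ↦ A z`:
`L p = Σᵢ (Σⱼ Aᵢⱼ Xⱼ) ∂p/∂Xᵢ`. -/
noncomputable def lieDeriv {n : ℕ} (A : Matrix (Fin n) (Fin n) ℂ)
    (p : MvPolynomial (Fin n) ℂ) : MvPolynomial (Fin n) ℂ :=
  ∑ i, (∑ j, MvPolynomial.C (A i j) * MvPolynomial.X j) * MvPolynomial.pderiv i p

namespace LieDerivAux

variable {n : ℕ}

lemma lieDeriv_add (A : Matrix (Fin n) (Fin n) ℂ) (p q : MvPolynomial (Fin n) ℂ) :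
    lieDeriv A (p + q) = lieDeriv A p + lieDeriv A q := by
  simp [lieDeriv, mul_add, Finset.sum_add_distrib]

lemma lieDeriv_smul (A : Matrix (Fin n) (Fin n) ℂ) (c : ℂ) (p : MvPolynomial (Fin n) ℂ) :
    lieDeriv A (c • p) = c • lieDeriv A p := by
  simp [lieDeriv, Finset.smul_sum, mul_smul_comm]

/-- `lieDeriv` as a linear map. -/
noncomputable def lieDerivLM (A : Matrix (Fin n) (Fin n) ℂ) :
    MvPolynomial (Fin n) ℂ →ₗ[ℂ] MvPolynomial (Fin n) ℂ where
  toFun := lieDeriv A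
  map_add' := lieDeriv_add A
  map_smul' := lieDeriv_smul A

lemma lieDeriv_sum (A : Matrix (Fin n) (Fin n) ℂ) {ι : Type*} (s : Finset ι)
    (f : ι → MvPolynomial (Fin n) ℂ) :
    lieDeriv A (∑ i ∈ s, f i) = ∑ i ∈ s, lieDeriv A (f i) :=
  map_sum (lieDerivLM A) f s

lemma lieDeriv_mul (A : Matrix (Fin n) (Fin n) ℂ) (p q : MvPolynomial (Fin n) ℂ) :
    lieDeriv A (p * q) = p * lieDeriv A q + q * lieDeriv A p := by
  simp only [lieDeriv, pderiv_mul, mul_add, Finset.sum_add_distrib, Finset.mul_sum]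
  rw [add_comm]
  congr 1 <;> refine Finset.sum_congr rfl fun i _ => ?_ <;> ring

lemma degree_eq_sum_univ (α : Fin n →₀ ℕ) : α.degree = ∑ i, α i := by
  rw [Finsupp.degree]
  exact Finset.sum_subset (Finset.subset_univ _)
    (fun i _ h => Finsupp.notMem_support_iff.mp h)

lemma deg_of_mem_support {p : MvPolynomial (Fin n) ℂ} {d : ℕ} (h : p.IsHomogeneous d)
    {α : Fin n →₀ ℕ} (hα : α ∈ p.support) : α.degree = d := by
  rw [Finsupp.degree_eq_weight_one]
  exact h (MvPolynomial.mem_support_iff.mp hα)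

lemma degree_sub_single {α : Fin n →₀ ℕ} {i : Fin n} (h : α i ≠ 0) :
    (α - Finsupp.single i 1).degree = α.degree - 1 := by
  rw [degree_eq_sum_univ, degree_eq_sum_univ]
  rw [← Finset.add_sum_erase _ _ (Finset.mem_univ i),
      ← Finset.add_sum_erase _ (fun j => α j) (Finset.mem_univ i)]
  have h1 : (α - Finsupp.single i 1 : Fin n →₀ ℕ) i = α i - 1 := by
    rw [Finsupp.tsub_apply, Finsupp.single_eq_same]
  have h2 : ∀ j ∈ Finset.univ.erase i, (α - Finsupp.single i 1 : Fin n →₀ ℕ) j = α j := by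
    intro j hj
    have hji : j ≠ i := (Finset.mem_erase.mp hj).1
    rw [Finsupp.tsub_apply, Finsupp.single_apply, if_neg (Ne.symm hji), Nat.sub_zero]
  rw [h1, Finset.sum_congr rfl h2]
  have hs : (Finset.univ.erase i).sum ⇑α = ∑ x ∈ Finset.univ.erase i, α x := rfl
  rw [hs]
  omega

lemma pderiv_isHomogeneous {p : MvPolynomial (Fin n) ℂ} {d : ℕ}
    (h : p.IsHomogeneous d) (i : Fin n) : (pderiv i p).IsHomogeneous (d - 1) := by
  conv_lhs => rw [p.as_sum]
  rw [map_sum]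
  apply IsHomogeneous.sum
  intro α hα
  rw [pderiv_monomial]
  by_cases h0 : α i = 0
  · simp only [h0, Nat.cast_zero, mul_zero, map_zero]
    exact isHomogeneous_zero _ _ _
  · apply isHomogeneous_monomial
    rw [degree_sub_single h0, deg_of_mem_support h hα]

lemma eq_C_of_isHomogeneous_zero {p : MvPolynomial (Fin n) ℂ}
    (h : p.IsHomogeneous 0) : p = C (coeff 0 p) := by
  ext β
  by_cases hβ : β = 0
  · simp [hβ]
  · rw [h.coeff_eq_zero (by simp [Finsupp.degree_eq_zero_iff, hβ])]
    rw [coeff_C, if_neg (fun hc => hβ hc.symm)]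

lemma lieDeriv_isHomogeneous (A : Matrix (Fin n) (Fin n) ℂ) {p : MvPolynomial (Fin n) ℂ}
    {d : ℕ} (h : p.IsHomogeneous d) : (lieDeriv A p).IsHomogeneous d := by
  rcases Nat.eq_zero_or_pos d with rfl | hd
  · rw [eq_C_of_isHomogeneous_zero h]
    simp only [lieDeriv, pderiv_C, mul_zero, Finset.sum_const_zero]
    exact isHomogeneous_zero _ _ _
  · apply IsHomogeneous.sum
    intro i _
    have h1 : (∑ j, (C (A i j) * X j : MvPolynomial (Fin n) ℂ)).IsHomogeneous 1 :=
      IsHomogeneous.sum _ _ _ fun j _ => isHomogeneous_C_mul_X _ _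
    have := h1.mul (pderiv_isHomogeneous h i)
    rwa [show 1 + (d - 1) = d by omega] at this

/-- The substitution `Xᵢ ↦ Σⱼ Mᵢⱼ Xⱼ` as an algebra homomorphism. -/
noncomputable def subst (M : Matrix (Fin n) (Fin n) ℂ) :
    MvPolynomial (Fin n) ℂ →ₐ[ℂ] MvPolynomial (Fin n) ℂ :=
  aeval fun i => ∑ j, C (M i j) * X j

lemma subst_C (M : Matrix (Fin n) (Fin n) ℂ) (c : ℂ) : subst M (C c) = C c := by
  simp [subst, algebraMap_eq]

lemma subst_X (M : Matrix (Fin n) (Fin n) ℂ) (k : Fin n) :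
    subst M (X k) = ∑ j, C (M k j) * X j := by
  simp [subst]

lemma sum_C_mul_sum (P Q : Matrix (Fin n) (Fin n) ℂ) (k : Fin n) :
    ∑ j, C (P k j) * ∑ l, C (Q j l) * X l
      = ∑ l, C ((P * Q) k l) * (X l : MvPolynomial (Fin n) ℂ) := by
  simp_rw [Finset.mul_sum, ← mul_assoc, ← C_mul]
  rw [Finset.sum_comm]
  refine Finset.sum_congr rfl fun l _ => ?_
  rw [← Finset.sum_mul, Matrix.mul_apply, map_sum]

lemma subst_subst (M N : Matrix (Fin n) (Fin n) ℂ) (p : MvPolynomial (Fin n) ℂ) :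
    subst M (subst N p) = subst (N * M) p := by
  have : (subst M).comp (subst N) = subst (N * M) := by
    apply algHom_ext
    intro k
    simp only [AlgHom.comp_apply, subst_X, map_sum, map_mul, subst_C]
    exact sum_C_mul_sum N M k
  exact congrArg (· p) (congrArg DFunLike.coe this)

lemma subst_one (p : MvPolynomial (Fin n) ℂ) : subst (1 : Matrix (Fin n) (Fin n) ℂ) p = p := by
  have : subst (1 : Matrix (Fin n) (Fin n) ℂ) = AlgHom.id ℂ _ := by
    apply algHom_ext
    intro k
    rw [subst_X, Finset.sum_eq_single k]
    · simp
    · intro j _ hjk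
      rw [Matrix.one_apply_ne (Ne.symm hjk), map_zero, zero_mul]
    · intro h; exact absurd (Finset.mem_univ k) h
  rw [this]; rfl

lemma subst_isHomogeneous (M : Matrix (Fin n) (Fin n) ℂ) {p : MvPolynomial (Fin n) ℂ}
    {d : ℕ} (h : p.IsHomogeneous d) : (subst M p).IsHomogeneous d := by
  have := h.aeval (fun i => ∑ j, C (M i j) * X j)
    (fun i => IsHomogeneous.sum _ _ _ fun j _ => isHomogeneous_C_mul_X _ _)
  rw [one_mul] at this
  exact this

lemma lieDeriv_X (B : Matrix (Fin n) (Fin n) ℂ) (k : Fin n) :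
    lieDeriv B (X k) = ∑ j, C (B k j) * X j := by
  rw [lieDeriv]
  rw [Finset.sum_eq_single k]
  · simp
  · intro i _ hik
    rw [pderiv_X_of_ne (Ne.symm hik), mul_zero]
  · intro h; exact absurd (Finset.mem_univ k) h

lemma lieDeriv_C_mul (A : Matrix (Fin n) (Fin n) ℂ) (c : ℂ) (p : MvPolynomial (Fin n) ℂ) :
    lieDeriv A (C c * p) = C c * lieDeriv A p := by
  rw [← smul_eq_C_mul, ← smul_eq_C_mul, lieDeriv_smul]

/-- Conjugation identity: if `M A = D M` then `L_A ∘ subst M = subst M ∘ L_D`. -/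
lemma lieDeriv_subst (A D M : Matrix (Fin n) (Fin n) ℂ) (h : M * A = D * M)
    (p : MvPolynomial (Fin n) ℂ) :
    lieDeriv A (subst M p) = subst M (lieDeriv D p) := by
  induction p using MvPolynomial.induction_on with
  | C a =>
      simp only [subst, aeval_C, algebraMap_eq, lieDeriv, pderiv_C, mul_zero,
        Finset.sum_const_zero, map_zero]
  | add p q hp hq =>
      rw [map_add, lieDeriv_add, lieDeriv_add, map_add, hp, hq]
  | mul_X p k hp =>
      have base : lieDeriv A (subst M (X k)) = subst M (lieDeriv D (X k)) := by
        rw [subst_X, lieDeriv_X]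
        have l1 : lieDeriv A (∑ j, C (M k j) * X j) = ∑ l, C ((M * A) k l) * X l := by
          rw [lieDeriv_sum]
          simp_rw [lieDeriv_C_mul, lieDeriv_X]
          exact sum_C_mul_sum M A k
        rw [l1, h]
        rw [map_sum]
        simp_rw [map_mul, subst_X]
        have : ∀ j, subst M (C (D k j)) = C (D k j) := fun j => by
          simp [subst, algebraMap_eq]
        simp_rw [this]
        exact (sum_C_mul_sum D M k).symm
      rw [map_mul, lieDeriv_mul, base, hp, ← map_mul, ← map_mul, ← map_add, ← lieDeriv_mul]

lemma lieDeriv_monomial_diag {D : Matrix (Fin n) (Fin n) ℂ} (hD : D.IsDiag)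
    (α : Fin n →₀ ℕ) (c : ℂ) :
    lieDeriv D (monomial α c)
      = monomial α ((∑ i, (α i : ℂ) * D i i) * c) := by
  rw [lieDeriv]
  have key : ∀ i : Fin n,
      (∑ j, C (D i j) * X j) * pderiv i (monomial α c)
        = monomial α ((α i : ℂ) * D i i * c) := by
    intro i
    have hsum : (∑ j, C (D i j) * X j : MvPolynomial (Fin n) ℂ) = C (D i i) * X i := by
      rw [Finset.sum_eq_single i]
      · intro j _ hji; rw [hD (Ne.symm hji), map_zero, zero_mul]
      · intro h; exact absurd (Finset.mem_univ i) h
    rw [hsum, pderiv_monomial]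
    by_cases h0 : α i = 0
    · simp [h0]
    · rw [show (X i : MvPolynomial (Fin n) ℂ) = monomial (Finsupp.single i 1) 1 from rfl,
        C_mul_monomial, monomial_mul,
        add_tsub_cancel_of_le (Finsupp.single_le_iff.mpr (Nat.one_le_iff_ne_zero.mpr h0))]
      congr 1
      ring
  rw [Finset.sum_congr rfl fun i _ => key i]
  rw [← map_sum (monomial α)]
  congr 1
  rw [Finset.sum_mul]

lemma coeff_lieDeriv_diag {D : Matrix (Fin n) (Fin n) ℂ} (hD : D.IsDiag)
    (p : MvPolynomial (Fin n) ℂ) (β : Fin n →₀ ℕ) :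
    coeff β (lieDeriv D p) = (∑ i, (β i : ℂ) * D i i) * coeff β p := by
  conv_lhs => rw [p.as_sum, lieDeriv_sum]
  simp_rw [lieDeriv_monomial_diag hD]
  rw [coeff_sum]
  simp_rw [coeff_monomial]
  rw [Finset.sum_ite_eq' p.support β]
  by_cases hβ : β ∈ p.support
  · rw [if_pos hβ]
  · rw [if_neg hβ, MvPolynomial.notMem_support_iff.mp hβ, mul_zero]

lemma mu_ne_zero {D : Matrix (Fin n) (Fin n) ℂ} (hstable : ∀ i, (D i i).re < 0)
    {d : ℕ} (hd : 1 ≤ d) {α : Fin n →₀ ℕ} (hα : α.degree = d) :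
    (∑ i, (α i : ℂ) * D i i) ≠ 0 := by
  intro hzero
  have hre : (∑ i, (α i : ℂ) * D i i).re = ∑ i, (α i : ℝ) * (D i i).re := by
    rw [Complex.re_sum]
    refine Finset.sum_congr rfl fun i _ => ?_
    simp [Complex.mul_re]
  have hne : ∃ i, α i ≠ 0 := by
    by_contra hc
    push_neg at hc
    have : α = 0 := Finsupp.ext fun i => hc i
    rw [this] at hα
    simp at hα
    omega
  obtain ⟨i0, hi0⟩ := hne
  have hlt : ∑ i, (α i : ℝ) * (D i i).re < ∑ _i : Fin n, (0 : ℝ) := by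
    apply Finset.sum_lt_sum
    · intro i _
      exact mul_nonpos_of_nonneg_of_nonpos (Nat.cast_nonneg _) (le_of_lt (hstable i))
    · exact ⟨i0, Finset.mem_univ i0, mul_neg_of_pos_of_neg
        (by exact_mod_cast Nat.pos_of_ne_zero hi0) (hstable i0)⟩
  rw [Finset.sum_const_zero] at hlt
  rw [hzero, Complex.zero_re] at hre
  rw [← hre] at hlt
  exact lt_irrefl _ hlt

lemma coeff_sum_monomial {s : Finset (Fin n →₀ ℕ)} (f : (Fin n →₀ ℕ) → ℂ) (β : Fin n →₀ ℕ) :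
    coeff β (∑ α ∈ s, monomial α (f α)) = if β ∈ s then f β else 0 := by
  rw [coeff_sum]
  simp_rw [coeff_monomial]
  rw [Finset.sum_ite_eq' s β]

/-- The diagonal case. -/
lemma diag_case {D : Matrix (Fin n) (Fin n) ℂ} (hD : D.IsDiag)
    (hstable : ∀ i, (D i i).re < 0) (d : ℕ) (hd : 1 ≤ d)
    (q : MvPolynomial (Fin n) ℂ) (hq : q.IsHomogeneous d) :
    ∃! p : MvPolynomial (Fin n) ℂ, p.IsHomogeneous d ∧ lieDeriv D p = q := by
  set μ : (Fin n →₀ ℕ) → ℂ := fun α => ∑ i, (α i : ℂ) * D i i with hμdef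
  have hdeg : ∀ α ∈ q.support, α.degree = d := fun α hα =>
    deg_of_mem_support hq hα
  refine ⟨∑ α ∈ q.support, monomial α (coeff α q / μ α), ⟨?_, ?_⟩, ?_⟩
  · exact IsHomogeneous.sum _ _ _ fun α hα => isHomogeneous_monomial _ (hdeg α hα)
  · ext β
    rw [coeff_lieDeriv_diag hD, coeff_sum_monomial]
    by_cases hβ : β ∈ q.support
    · rw [if_pos hβ, mul_div_cancel₀ _ (mu_ne_zero hstable hd (hdeg β hβ))]
    · rw [if_neg hβ, mul_zero, MvPolynomial.notMem_support_iff.mp hβ]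
  · intro p ⟨hph, hpe⟩
    ext β
    rw [coeff_sum_monomial]
    by_cases hβd : β.degree = d
    · have hcoeff : μ β * coeff β p = coeff β q := by
        rw [← coeff_lieDeriv_diag hD, hpe]
      by_cases hβ : β ∈ q.support
      · rw [if_pos hβ, eq_div_iff (mu_ne_zero hstable hd hβd), mul_comm, hcoeff]
      · rw [if_neg hβ]
        have hq0 : coeff β q = 0 := MvPolynomial.notMem_support_iff.mp hβ
        have := hcoeff.trans hq0
        exact (mul_eq_zero.mp this).resolve_left (mu_ne_zero hstable hd hβd)
    · rw [hph.coeff_eq_zero hβd]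
      have : β ∉ q.support := fun hβ => hβd (hdeg β hβ)
      rw [if_neg this]

end LieDerivAux

open LieDerivAux in
theorem lieDeriv_bijective_on_homogeneous
    (n : ℕ) (hn : 0 < n)
    (A T D : Matrix (Fin n) (Fin n) ℂ)
    (hT : IsUnit T.det) (hD : D.IsDiag)
    (hA : A = T * D * T⁻¹)
    (hstable : ∀ i, (D i i).re < 0) :
    (∀ (d : ℕ) (p : MvPolynomial (Fin n) ℂ),
        p.IsHomogeneous d → (lieDeriv A p).IsHomogeneous d)
    ∧ (∀ d : ℕ, 1 ≤ d → ∀ q : MvPolynomial (Fin n) ℂ, q.IsHomogeneous d →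
        ∃! p : MvPolynomial (Fin n) ℂ, p.IsHomogeneous d ∧ lieDeriv A p = q) := by
  constructor
  · intro d p hp
    exact lieDeriv_isHomogeneous A hp
  · intro d hd q hq
    have hcomm : T⁻¹ * A = D * T⁻¹ := by
      rw [hA, ← Matrix.mul_assoc, ← Matrix.mul_assoc, Matrix.nonsing_inv_mul T hT, Matrix.one_mul]
    have hconj : ∀ r, lieDeriv A (subst T⁻¹ r) = subst T⁻¹ (lieDeriv D r) :=
      lieDeriv_subst A D T⁻¹ hcomm
    have hcancel1 : ∀ r, subst T⁻¹ (subst T r) = r := fun r => by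
      rw [subst_subst, Matrix.mul_nonsing_inv T hT, subst_one]
    have hcancel2 : ∀ r, subst T (subst T⁻¹ r) = r := fun r => by
      rw [subst_subst, Matrix.nonsing_inv_mul T hT, subst_one]
    obtain ⟨p', ⟨hp'h, hp'e⟩, hp'u⟩ :=
      diag_case hD hstable d hd (subst T q) (subst_isHomogeneous T hq)
    refine ⟨subst T⁻¹ p', ⟨subst_isHomogeneous _ hp'h, ?_⟩, ?_⟩
    · rw [hconj, hp'e, hcancel1]
    · intro p₂ ⟨hp₂h, hp₂e⟩
      have key : lieDeriv D (subst T p₂) = subst T q := by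
        have := hconj (subst T p₂)
        rw [hcancel1] at this
        rw [hp₂e] at this
        have := congrArg (subst T) this
        rw [hcancel2] at this
        exact this.symm
      have := hp'u (subst T p₂) ⟨subst_isHomogeneous T hp₂h, key⟩
      rw [← this, hcancel1]
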